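/- Let H₁, H₂ be separable complex Hilbert spaces, H = H₁ ⊗ H₂, and (X, μ) = (X₁ × X₂, μ₁ ⊗ μ₂) the product of measure spaces with σ-finite positive measures. Assume that for j = 1, 2 there exists g_j ∈ H_j with 0 < ∫_{X_j} |⟨g_j, F_j(x_j)⟩|² dμ_j(x_j) < ∞. Then F = F₁ ⊗ F₂ : X → H is a Bessel mapping for H with respect to (X, μ) if and only if F₁ is a Bessel mapping for H₁ with respect to (X₁, μ₁) and F₂ is a Bessel mapping for H₂ with respect to (X₂, μ₂). -/

import Mathlib

open MeasureTheory ENNReal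

noncomputable section

namespace ContFrame

variable {X : Type*} {H : Type*}

/-- The paper's inner product `⟨f, g⟩`: linear in the first argument and
conjugate-linear in the second (Mathlib's `inner` is conjugate-linear in the first). -/
def pinner [NormedAddCommGroup H] [InnerProductSpace ℂ H] (f g : H) : ℂ :=
  @inner ℂ _ _ g f

/-- `∫_X |⟨f, F x⟩|² dμ(x)`, as a lower integral. -/
def frameInt [MeasurableSpace X] [NormedAddCommGroup H] [InnerProductSpace ℂ H]
    (μ : Measure X) (F : X → H) (f : H) : ℝ≥0∞ :=
  ∫⁻ x, (‖pinner f (F x)‖₊ : ℝ≥0∞) ^ 2 ∂μ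

/-- `F` is weakly measurable: `x ↦ ⟨f, F x⟩` is μ-measurable for every `f`. -/
def WeaklyMeasurable [MeasurableSpace X] [NormedAddCommGroup H] [InnerProductSpace ℂ H]
    (μ : Measure X) (F : X → H) : Prop :=
  ∀ f : H, AEMeasurable (fun x => pinner f (F x)) μ

/-- `F` is a Bessel mapping for `H` w.r.t. `(X, μ)` with Bessel bound `B < ∞`. -/
def IsBesselMapping [MeasurableSpace X] [NormedAddCommGroup H] [InnerProductSpace ℂ H]
    (μ : Measure X) (F : X → H) (B : ℝ≥0∞) : Prop :=
  B < ⊤ ∧ WeaklyMeasurable μ F ∧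
    ∀ f : H, frameInt μ F f ≤ B * (‖f‖₊ : ℝ≥0∞) ^ 2

/-- `F` is a continuous frame for `H` w.r.t. `(X, μ)` with frame bounds `0 < A ≤ B < ∞`:
`A ‖f‖² ≤ ∫_X |⟨f, F x⟩|² dμ(x) ≤ B ‖f‖²` for all `f ∈ H`. -/
def IsContinuousFrame [MeasurableSpace X] [NormedAddCommGroup H] [InnerProductSpace ℂ H]
    (μ : Measure X) (F : X → H) (A B : ℝ≥0∞) : Prop :=
  0 < A ∧ A ≤ B ∧ B < ⊤ ∧ WeaklyMeasurable μ F ∧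
    ∀ f : H, A * (‖f‖₊ : ℝ≥0∞) ^ 2 ≤ frameInt μ F f ∧
      frameInt μ F f ≤ B * (‖f‖₊ : ℝ≥0∞) ^ 2

/-- A realization of the Hilbert tensor product `H = H₁ ⊗ H₂`: a bilinear map
`tmul` whose simple tensors satisfy `⟪a⊗b, c⊗d⟫ = ⟪a,c⟫⟪b,d⟫` and span a dense subspace. -/
structure HilbertTensorProduct (H₁ H₂ H : Type*)
    [NormedAddCommGroup H₁] [InnerProductSpace ℂ H₁]
    [NormedAddCommGroup H₂] [InnerProductSpace ℂ H₂]
    [NormedAddCommGroup H] [InnerProductSpace ℂ H] where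
  tmul : H₁ →ₗ[ℂ] H₂ →ₗ[ℂ] H
  inner_tmul : ∀ (a c : H₁) (b d : H₂),
    (inner ℂ (tmul a b) (tmul c d) : ℂ) = (inner ℂ a c : ℂ) * (inner ℂ b d : ℂ)
  dense_span : Dense (↑(Submodule.span ℂ {z : H | ∃ a b, z = tmul a b}) : Set H)

/-! ### Auxiliary lemmas -/

section Aux

variable {H₁ H₂ : Type*}
    [NormedAddCommGroup H₁] [InnerProductSpace ℂ H₁]
    [NormedAddCommGroup H₂] [InnerProductSpace ℂ H₂]
    [NormedAddCommGroup H] [InnerProductSpace ℂ H]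

lemma pinner_add_left (f g h : H) : pinner (f + g) h = pinner f h + pinner g h := by
  simp [pinner, inner_add_right]

lemma pinner_smul_left (c : ℂ) (f h : H) : pinner (c • f) h = c * pinner f h := by
  simp [pinner, inner_smul_right]

lemma pinner_zero_left (h : H) : pinner (0 : H) h = 0 := by simp [pinner]

lemma pinner_sum_left {ι : Type*} (s : Finset ι) (f : ι → H) (h : H) :
    pinner (∑ i ∈ s, f i) h = ∑ i ∈ s, pinner (f i) h := by
  simp [pinner, inner_sum]

variable (tp : HilbertTensorProduct H₁ H₂ H)

lemma pinner_tmul (a u : H₁) (b w : H₂) :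
    pinner (tp.tmul a b) (tp.tmul u w) = pinner a u * pinner b w := by
  simp only [pinner, tp.inner_tmul]

lemma norm_tmul (a : H₁) (b : H₂) : ‖tp.tmul a b‖ = ‖a‖ * ‖b‖ := by
  have h1 := inner_self_eq_norm_sq_to_K (𝕜 := ℂ) (tp.tmul a b)
  rw [tp.inner_tmul, inner_self_eq_norm_sq_to_K, inner_self_eq_norm_sq_to_K] at h1
  have h2 : ‖a‖ ^ 2 * ‖b‖ ^ 2 = ‖tp.tmul a b‖ ^ 2 := by exact_mod_cast h1
  nlinarith [norm_nonneg (tp.tmul a b), norm_nonneg a, norm_nonneg b,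
    mul_nonneg (norm_nonneg a) (norm_nonneg b)]

lemma nnnorm_tmul (a : H₁) (b : H₂) : ‖tp.tmul a b‖₊ = ‖a‖₊ * ‖b‖₊ := by
  ext; simp [norm_tmul]

/-- transfer of squared norms to `ℝ≥0∞` -/
lemma enorm_sq_eq {E : Type*} [NormedAddCommGroup E] (x : E) :
    (‖x‖₊ : ℝ≥0∞) ^ 2 = ENNReal.ofReal (‖x‖ ^ 2) := by
  rw [ENNReal.ofReal_pow (norm_nonneg x), ofReal_norm, enorm_eq_nnnorm]

end Aux

section Main

variable {X₁ X₂ : Type*} [MeasurableSpace X₁] [MeasurableSpace X₂]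
    {H₁ H₂ H : Type*}
    [NormedAddCommGroup H₁] [InnerProductSpace ℂ H₁]
    [NormedAddCommGroup H₂] [InnerProductSpace ℂ H₂]
    [NormedAddCommGroup H] [InnerProductSpace ℂ H]

/-- Factorization of the frame integral on simple tensors. -/
lemma frameInt_tmul (μ₁ : Measure X₁) (μ₂ : Measure X₂) [SigmaFinite μ₁] [SigmaFinite μ₂]
    (tp : HilbertTensorProduct H₁ H₂ H) {F₁ : X₁ → H₁} {F₂ : X₂ → H₂} {f₁ : H₁} {f₂ : H₂}
    (h₁ : AEMeasurable (fun x₁ => pinner f₁ (F₁ x₁)) μ₁)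
    (h₂ : AEMeasurable (fun x₂ => pinner f₂ (F₂ x₂)) μ₂) :
    frameInt (μ₁.prod μ₂) (fun x : X₁ × X₂ => tp.tmul (F₁ x.1) (F₂ x.2)) (tp.tmul f₁ f₂)
      = frameInt μ₁ F₁ f₁ * frameInt μ₂ F₂ f₂ := by
  have key : ∀ x : X₁ × X₂,
      (‖pinner (tp.tmul f₁ f₂) (tp.tmul (F₁ x.1) (F₂ x.2))‖₊ : ℝ≥0∞) ^ 2
        = (‖pinner f₁ (F₁ x.1)‖₊ : ℝ≥0∞) ^ 2 * (‖pinner f₂ (F₂ x.2)‖₊ : ℝ≥0∞) ^ 2 := by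
    intro x
    rw [pinner_tmul, nnnorm_mul]
    push_cast
    ring
  unfold frameInt
  simp_rw [key]
  exact lintegral_prod_mul (h₁.nnnorm.coe_nnreal_ennreal.pow_const 2) (h₂.nnnorm.coe_nnreal_ennreal.pow_const 2)

/-- A.e. sections (in the first variable) of an a.e.-measurable function on a product. -/
lemma ae_aemeasurable_section_left (μ₁ : Measure X₁) (μ₂ : Measure X₂)
    [SigmaFinite μ₁] [SigmaFinite μ₂] {h : X₁ × X₂ → ℂ}
    (hm : AEMeasurable h (μ₁.prod μ₂)) :
    ∀ᵐ x₂ ∂μ₂, AEMeasurable (fun x₁ => h (x₁, x₂)) μ₁ := by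
  have hswap : AEMeasurable (fun y : X₂ × X₁ => h (y.2, y.1)) (μ₂.prod μ₁) := by
    exact hm.comp_quasiMeasurePreserving
      (MeasureTheory.Measure.measurePreserving_swap).quasiMeasurePreserving
  obtain ⟨G, hGmeas, hGae⟩ := hswap
  filter_upwards [Measure.ae_ae_of_ae_prod hGae] with x₂ hx₂
  exact ⟨fun x₁ => G (x₂, x₁), hGmeas.comp measurable_prodMk_left, hx₂⟩

/-- If the frame integral at `g` is positive, then `x ↦ ⟨g, F x⟩` is not a.e. zero. -/
lemma not_ae_zero_of_frameInt_pos {X : Type*} [MeasurableSpace X] {μ : Measure X}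
    {F : X → H} {g : H} (hpos : 0 < frameInt μ F g) :
    ¬ (fun x => pinner g (F x)) =ᵐ[μ] 0 := by
  intro hae
  have : frameInt μ F g = 0 := by
    unfold frameInt
    rw [lintegral_congr_ae (g := fun _ => 0)]
    · simp
    · filter_upwards [hae] with x hx
      simp only [Pi.zero_apply] at hx
      simp [hx]
  simp [this] at hpos


/-- A.e. sections (in the second variable) of an a.e.-measurable function on a product. -/
lemma ae_aemeasurable_section_right (μ₁ : Measure X₁) (μ₂ : Measure X₂)
    [SigmaFinite μ₁] [SigmaFinite μ₂] {h : X₁ × X₂ → ℂ}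
    (hm : AEMeasurable h (μ₁.prod μ₂)) :
    ∀ᵐ x₁ ∂μ₁, AEMeasurable (fun x₂ => h (x₁, x₂)) μ₂ := by
  obtain ⟨G, hGmeas, hGae⟩ := hm
  filter_upwards [Measure.ae_ae_of_ae_prod hGae] with x₁ hx₁
  exact ⟨fun x₂ => G (x₁, x₂), hGmeas.comp measurable_prodMk_left, hx₁⟩

variable (tp : HilbertTensorProduct H₁ H₂ H)

lemma weaklyMeasurable_left_of_tensor (μ₁ : Measure X₁) (μ₂ : Measure X₂)
    [SigmaFinite μ₁] [SigmaFinite μ₂] {F₁ : X₁ → H₁} {F₂ : X₂ → H₂}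
    (hF : WeaklyMeasurable (μ₁.prod μ₂) (fun x : X₁ × X₂ => tp.tmul (F₁ x.1) (F₂ x.2)))
    {g₂ : H₂} (hpos : 0 < frameInt μ₂ F₂ g₂) :
    WeaklyMeasurable μ₁ F₁ := by
  intro f₁
  have hm' : AEMeasurable (fun x : X₁ × X₂ =>
      pinner f₁ (F₁ x.1) * pinner g₂ (F₂ x.2)) (μ₁.prod μ₂) := by
    have hm := hF (tp.tmul f₁ g₂)
    simpa only [pinner_tmul tp] using hm
  have hsec := ae_aemeasurable_section_left μ₁ μ₂ hm'
  have hnz := not_ae_zero_of_frameInt_pos hpos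
  have hex : ∃ x₂, AEMeasurable (fun x₁ => pinner f₁ (F₁ x₁) * pinner g₂ (F₂ x₂)) μ₁ ∧
      pinner g₂ (F₂ x₂) ≠ 0 := by
    by_contra hcon
    push_neg at hcon
    apply hnz
    rw [Filter.EventuallyEq, MeasureTheory.ae_iff]
    refine measure_mono_null (fun x₂ hx₂ => ?_) (MeasureTheory.ae_iff.1 hsec)
    intro hPx₂
    exact hx₂ (hcon x₂ hPx₂)
  obtain ⟨x₂, hmeas, hc⟩ := hex
  have h2 := hmeas.mul_const (pinner g₂ (F₂ x₂))⁻¹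
  simpa [mul_assoc, mul_inv_cancel₀ hc] using h2

lemma weaklyMeasurable_right_of_tensor (μ₁ : Measure X₁) (μ₂ : Measure X₂)
    [SigmaFinite μ₁] [SigmaFinite μ₂] {F₁ : X₁ → H₁} {F₂ : X₂ → H₂}
    (hF : WeaklyMeasurable (μ₁.prod μ₂) (fun x : X₁ × X₂ => tp.tmul (F₁ x.1) (F₂ x.2)))
    {g₁ : H₁} (hpos : 0 < frameInt μ₁ F₁ g₁) :
    WeaklyMeasurable μ₂ F₂ := by
  intro f₂
  have hm' : AEMeasurable (fun x : X₁ × X₂ =>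
      pinner g₁ (F₁ x.1) * pinner f₂ (F₂ x.2)) (μ₁.prod μ₂) := by
    have hm := hF (tp.tmul g₁ f₂)
    simpa only [pinner_tmul tp] using hm
  have hsec := ae_aemeasurable_section_right μ₁ μ₂ hm'
  have hnz := not_ae_zero_of_frameInt_pos hpos
  have hex : ∃ x₁, AEMeasurable (fun x₂ => pinner g₁ (F₁ x₁) * pinner f₂ (F₂ x₂)) μ₂ ∧
      pinner g₁ (F₁ x₁) ≠ 0 := by
    by_contra hcon
    push_neg at hcon
    apply hnz
    rw [Filter.EventuallyEq, MeasureTheory.ae_iff]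
    refine measure_mono_null (fun x₁ hx₁ => ?_) (MeasureTheory.ae_iff.1 hsec)
    intro hPx₁
    exact hx₁ (hcon x₁ hPx₁)
  obtain ⟨x₁, hmeas, hc⟩ := hex
  have h2 := hmeas.const_mul (pinner g₁ (F₁ x₁))⁻¹
  refine h2.congr (Filter.Eventually.of_forall fun x₂ => ?_)
  simp only []
  rw [← mul_assoc, inv_mul_cancel₀ hc, one_mul]

lemma bessel_left_of_tensor (μ₁ : Measure X₁) (μ₂ : Measure X₂)
    [SigmaFinite μ₁] [SigmaFinite μ₂] {F₁ : X₁ → H₁} {F₂ : X₂ → H₂} {B : ℝ≥0∞}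
    (hB : IsBesselMapping (μ₁.prod μ₂)
      (fun x : X₁ × X₂ => tp.tmul (F₁ x.1) (F₂ x.2)) B)
    {g₂ : H₂} (hpos : 0 < frameInt μ₂ F₂ g₂) (hfin : frameInt μ₂ F₂ g₂ < ⊤)
    (wm₁ : WeaklyMeasurable μ₁ F₁)
    (hmg₂ : AEMeasurable (fun x₂ => pinner g₂ (F₂ x₂)) μ₂) :
    ∃ B₁, IsBesselMapping μ₁ F₁ B₁ := by
  obtain ⟨hBlt, hwm, hbound⟩ := hB
  set c₂ := frameInt μ₂ F₂ g₂ with hc₂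
  refine ⟨B * (‖g₂‖₊ : ℝ≥0∞) ^ 2 / c₂, ?_, wm₁, ?_⟩
  · exact ENNReal.div_lt_top (ENNReal.mul_ne_top hBlt.ne
      (ENNReal.pow_ne_top ENNReal.coe_ne_top)) hpos.ne'
  · intro f₁
    have heq := frameInt_tmul μ₁ μ₂ tp (wm₁ f₁) hmg₂
    have hle := hbound (tp.tmul f₁ g₂)
    rw [heq, nnnorm_tmul] at hle
    have hrw : B * (‖g₂‖₊ : ℝ≥0∞) ^ 2 / c₂ * (‖f₁‖₊ : ℝ≥0∞) ^ 2
        = B * ((‖f₁‖₊ * ‖g₂‖₊ : NNReal) : ℝ≥0∞) ^ 2 / c₂ := by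
      rw [div_eq_mul_inv, div_eq_mul_inv, ENNReal.coe_mul]
      ring
    rw [hrw, ENNReal.le_div_iff_mul_le (Or.inl hpos.ne') (Or.inl hfin.ne)]
    exact hle

lemma bessel_right_of_tensor (μ₁ : Measure X₁) (μ₂ : Measure X₂)
    [SigmaFinite μ₁] [SigmaFinite μ₂] {F₁ : X₁ → H₁} {F₂ : X₂ → H₂} {B : ℝ≥0∞}
    (hB : IsBesselMapping (μ₁.prod μ₂)
      (fun x : X₁ × X₂ => tp.tmul (F₁ x.1) (F₂ x.2)) B)
    {g₁ : H₁} (hpos : 0 < frameInt μ₁ F₁ g₁) (hfin : frameInt μ₁ F₁ g₁ < ⊤)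
    (wm₂ : WeaklyMeasurable μ₂ F₂)
    (hmg₁ : AEMeasurable (fun x₁ => pinner g₁ (F₁ x₁)) μ₁) :
    ∃ B₂, IsBesselMapping μ₂ F₂ B₂ := by
  obtain ⟨hBlt, hwm, hbound⟩ := hB
  set c₁ := frameInt μ₁ F₁ g₁ with hc₁
  refine ⟨B * (‖g₁‖₊ : ℝ≥0∞) ^ 2 / c₁, ?_, wm₂, ?_⟩
  · exact ENNReal.div_lt_top (ENNReal.mul_ne_top hBlt.ne
      (ENNReal.pow_ne_top ENNReal.coe_ne_top)) hpos.ne'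
  · intro f₂
    have heq := frameInt_tmul μ₁ μ₂ tp hmg₁ (wm₂ f₂)
    have hle := hbound (tp.tmul g₁ f₂)
    rw [heq, nnnorm_tmul] at hle
    have hrw : B * (‖g₁‖₊ : ℝ≥0∞) ^ 2 / c₁ * (‖f₂‖₊ : ℝ≥0∞) ^ 2
        = B * ((‖g₁‖₊ * ‖f₂‖₊ : NNReal) : ℝ≥0∞) ^ 2 / c₁ := by
      rw [div_eq_mul_inv, div_eq_mul_inv, ENNReal.coe_mul]
      ring
    rw [hrw, ENNReal.le_div_iff_mul_le (Or.inl hpos.ne') (Or.inl hfin.ne)]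
    rw [mul_comm c₁] at hle
    exact hle

end Main



section Forward

variable {X₁ X₂ : Type*} [MeasurableSpace X₁] [MeasurableSpace X₂]
    {H₁ H₂ H : Type*}
    [NormedAddCommGroup H₁] [InnerProductSpace ℂ H₁]
    [NormedAddCommGroup H₂] [InnerProductSpace ℂ H₂]
    [NormedAddCommGroup H] [InnerProductSpace ℂ H]

/-- Squared norm of an orthonormal expansion, in `ℝ≥0∞`. -/
lemma enorm_sq_sum_orthonormal {m : ℕ} {e : Fin m → H₂} (he : Orthonormal ℂ e)
    (l : Fin m → ℂ) :
    (‖∑ k, l k • e k‖₊ : ℝ≥0∞) ^ 2 = ∑ k, (‖l k‖₊ : ℝ≥0∞) ^ 2 := by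
  have h0 := he.inner_sum l l Finset.univ
  rw [inner_self_eq_norm_sq_to_K] at h0
  simp only [RCLike.conj_mul] at h0
  have h2 : ‖∑ k, l k • e k‖ ^ 2 = ∑ k, ‖l k‖ ^ 2 := by exact_mod_cast h0
  rw [enorm_sq_eq, h2, ENNReal.ofReal_sum_of_nonneg (fun i _ => sq_nonneg _)]
  exact Finset.sum_congr rfl fun k _ => (enorm_sq_eq _).symm

variable (tp : HilbertTensorProduct H₁ H₂ H)

/-- Squared norm of a sum of simple tensors with orthonormal right factors. -/
lemma enorm_sq_sum_tmul_orthonormal {m : ℕ} (c : Fin m → H₁) {e : Fin m → H₂}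
    (he : Orthonormal ℂ e) :
    (‖∑ k, tp.tmul (c k) (e k)‖₊ : ℝ≥0∞) ^ 2 = ∑ k, (‖c k‖₊ : ℝ≥0∞) ^ 2 := by
  have hinner : (inner ℂ (∑ k, tp.tmul (c k) (e k)) (∑ k, tp.tmul (c k) (e k)) : ℂ)
      = ∑ k, (inner ℂ (c k) (c k) : ℂ) := by
    rw [sum_inner]
    refine Finset.sum_congr rfl fun k _ => ?_
    rw [inner_sum]
    simp only [tp.inner_tmul, orthonormal_iff_ite.1 he, mul_ite, mul_one, mul_zero]
    simp
  rw [inner_self_eq_norm_sq_to_K] at hinner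
  simp only [inner_self_eq_norm_sq_to_K] at hinner
  have h2 : ‖∑ k, tp.tmul (c k) (e k)‖ ^ 2 = ∑ k, ‖c k‖ ^ 2 := by exact_mod_cast hinner
  rw [enorm_sq_eq, h2, ENNReal.ofReal_sum_of_nonneg (fun i _ => sq_nonneg _)]
  exact Finset.sum_congr rfl fun k _ => (enorm_sq_eq _).symm

/-- Every element of the span of simple tensors is a finite sum of simple tensors
with orthonormal right factors. -/
lemma exists_orthonormal_repr {f : H}
    (hf : f ∈ Submodule.span ℂ {z : H | ∃ a b, z = tp.tmul a b}) :
    ∃ (m : ℕ) (c : Fin m → H₁) (e : Fin m → H₂), Orthonormal ℂ e ∧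
      f = ∑ k, tp.tmul (c k) (e k) := by
  obtain ⟨n, t, g, hsum⟩ := Submodule.mem_span_set'.1 hf
  choose a b hab using fun i => (g i).2
  haveI : FiniteDimensional ℂ (Submodule.span ℂ (Set.range b)) :=
    FiniteDimensional.span_of_finite ℂ (Set.finite_range b)
  set W := Submodule.span ℂ (Set.range b) with hWdef
  set obn := stdOrthonormalBasis ℂ W with hobn
  set m := Module.finrank ℂ W with hm
  set e : Fin m → H₂ := fun k => ((obn k : W) : H₂) with he
  have heo : Orthonormal ℂ e := by
    constructor
    · intro k
      exact obn.orthonormal.1 k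
    · intro k l hkl
      have h2 : (inner ℂ (obn k) (obn l) : ℂ) = 0 := obn.orthonormal.2 hkl
      rw [Submodule.coe_inner] at h2
      exact h2
  have hbW : ∀ i, b i ∈ W := fun i => Submodule.subset_span (Set.mem_range_self i)
  have hrepr : ∀ i, b i = ∑ k, (inner ℂ (e k) (b i) : ℂ) • e k := by
    intro i
    have h0 := obn.sum_repr' (⟨b i, hbW i⟩ : W)
    have h1 := congrArg (Subtype.val : W → H₂) h0
    rw [Submodule.coe_sum] at h1
    simp only [Submodule.coe_smul, Submodule.coe_inner] at h1
    exact h1.symm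
  refine ⟨m, fun k => ∑ i, (t i * (inner ℂ (e k) (b i) : ℂ)) • a i, e, heo, ?_⟩
  have hexp : ∀ k, tp.tmul (∑ i, (t i * (inner ℂ (e k) (b i) : ℂ)) • a i) (e k)
      = ∑ i, (t i * (inner ℂ (e k) (b i) : ℂ)) • tp.tmul (a i) (e k) := by
    intro k
    rw [map_sum]
    simp only [_root_.map_smul, LinearMap.coe_sum, Finset.sum_apply, LinearMap.smul_apply]
  calc f = ∑ i, t i • tp.tmul (a i) (b i) := by
        rw [← hsum]
        exact Finset.sum_congr rfl fun i _ => by rw [hab i]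
    _ = ∑ i, t i • tp.tmul (a i) (∑ k, (inner ℂ (e k) (b i) : ℂ) • e k) := by
        refine Finset.sum_congr rfl fun i _ => ?_
        rw [← hrepr i]
    _ = ∑ i, ∑ k, (t i * (inner ℂ (e k) (b i) : ℂ)) • tp.tmul (a i) (e k) := by
        refine Finset.sum_congr rfl fun i _ => ?_
        rw [map_sum, Finset.smul_sum]
        refine Finset.sum_congr rfl fun k _ => ?_
        rw [_root_.map_smul, smul_smul]
    _ = ∑ k, ∑ i, (t i * (inner ℂ (e k) (b i) : ℂ)) • tp.tmul (a i) (e k) :=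
        Finset.sum_comm
    _ = ∑ k, tp.tmul (∑ i, (t i * (inner ℂ (e k) (b i) : ℂ)) • a i) (e k) := by
        refine Finset.sum_congr rfl fun k _ => (hexp k).symm

/-- Weak measurability of the tensor map from weak measurability of the factors. -/
lemma weaklyMeasurable_tensor (μ₁ : Measure X₁) (μ₂ : Measure X₂)
    [SigmaFinite μ₁] [SigmaFinite μ₂] {F₁ : X₁ → H₁} {F₂ : X₂ → H₂}
    (w₁ : WeaklyMeasurable μ₁ F₁) (w₂ : WeaklyMeasurable μ₂ F₂) :
    WeaklyMeasurable (μ₁.prod μ₂) (fun x : X₁ × X₂ => tp.tmul (F₁ x.1) (F₂ x.2)) := by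
  have hspan : ∀ f ∈ Submodule.span ℂ {z : H | ∃ a b, z = tp.tmul a b},
      AEMeasurable (fun x : X₁ × X₂ =>
        pinner f (tp.tmul (F₁ x.1) (F₂ x.2))) (μ₁.prod μ₂) := by
    intro f hf
    induction hf using Submodule.span_induction with
    | mem z hz =>
        obtain ⟨a, b, rfl⟩ := hz
        have ha : AEMeasurable (fun x : X₁ × X₂ => pinner a (F₁ x.1)) (μ₁.prod μ₂) :=
          (w₁ a).comp_quasiMeasurePreserving Measure.quasiMeasurePreserving_fst
        have hb : AEMeasurable (fun x : X₁ × X₂ => pinner b (F₂ x.2)) (μ₁.prod μ₂) :=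
          (w₂ b).comp_quasiMeasurePreserving Measure.quasiMeasurePreserving_snd
        simpa only [pinner_tmul tp, Pi.mul_def] using ha.mul hb
    | zero => simpa only [pinner_zero_left] using aemeasurable_const (b := (0 : ℂ))
    | add x y hx hy ihx ihy => simpa only [pinner_add_left, Pi.add_def] using ihx.add ihy
    | smul c x hx ih => simpa only [pinner_smul_left] using ih.const_mul c
  intro f
  have hd := tp.dense_span
  have hch : ∀ n : ℕ, ∃ y ∈ (↑(Submodule.span ℂ {z : H | ∃ a b, z = tp.tmul a b}) : Set H),
      dist f y < 1 / (n + 1) := fun n => hd.exists_dist_lt f (by positivity)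
  choose seq hmem hdist using hch
  have ht : Filter.Tendsto seq Filter.atTop (nhds f) := by
    rw [tendsto_iff_dist_tendsto_zero]
    refine squeeze_zero (fun n => dist_nonneg) (fun n => ?_)
      tendsto_one_div_add_atTop_nhds_zero_nat
    rw [dist_comm]
    exact (hdist n).le
  refine aemeasurable_of_tendsto_metrizable_ae' (fun n => hspan (seq n) (hmem n))
    (Filter.Eventually.of_forall fun x => ?_)
  exact Filter.Tendsto.inner tendsto_const_nhds ht

/-- The core estimate: Bessel bound for a sum of simple tensors with orthonormal
right factors. -/
lemma frameInt_le_of_orthonormal (μ₁ : Measure X₁) (μ₂ : Measure X₂)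
    [SigmaFinite μ₁] [SigmaFinite μ₂] {F₁ : X₁ → H₁} {F₂ : X₂ → H₂} {B₁ B₂ : ℝ≥0∞}
    (h₁ : IsBesselMapping μ₁ F₁ B₁) (h₂ : IsBesselMapping μ₂ F₂ B₂)
    {m : ℕ} (c : Fin m → H₁) {e : Fin m → H₂} (he : Orthonormal ℂ e)
    (hm : AEMeasurable (fun x : X₁ × X₂ =>
      pinner (∑ k, tp.tmul (c k) (e k)) (tp.tmul (F₁ x.1) (F₂ x.2))) (μ₁.prod μ₂)) :
    frameInt (μ₁.prod μ₂) (fun x : X₁ × X₂ => tp.tmul (F₁ x.1) (F₂ x.2))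
        (∑ k, tp.tmul (c k) (e k))
      ≤ B₁ * B₂ * (‖∑ k, tp.tmul (c k) (e k)‖₊ : ℝ≥0∞) ^ 2 := by
  set f : H := ∑ k, tp.tmul (c k) (e k) with hfdef
  have hpt : ∀ (u : H₁) (w : H₂),
      pinner f (tp.tmul u w) = pinner (∑ k, (pinner (c k) u) • e k) w := by
    intro u w
    rw [hfdef, pinner_sum_left, pinner_sum_left]
    refine Finset.sum_congr rfl fun k _ => ?_
    rw [pinner_tmul, pinner_smul_left]
  calc frameInt (μ₁.prod μ₂) (fun x : X₁ × X₂ => tp.tmul (F₁ x.1) (F₂ x.2)) f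
      = ∫⁻ x₁, ∫⁻ x₂, (‖pinner (∑ k, (pinner (c k) (F₁ x₁)) • e k) (F₂ x₂)‖₊ : ℝ≥0∞) ^ 2
          ∂μ₂ ∂μ₁ := by
        unfold frameInt
        rw [lintegral_prod _ (hm.nnnorm.coe_nnreal_ennreal.pow_const 2)]
        refine lintegral_congr fun x₁ => lintegral_congr fun x₂ => ?_
        rw [hpt]
    _ ≤ ∫⁻ x₁, B₂ * ∑ k, (‖pinner (c k) (F₁ x₁)‖₊ : ℝ≥0∞) ^ 2 ∂μ₁ := by
        refine lintegral_mono fun x₁ => ?_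
        have hb := h₂.2.2 (∑ k, (pinner (c k) (F₁ x₁)) • e k)
        rw [enorm_sq_sum_orthonormal he] at hb
        exact hb
    _ = B₂ * ∑ k, frameInt μ₁ F₁ (c k) := by
        rw [lintegral_const_mul' _ _ h₂.1.ne,
          lintegral_finset_sum' _ (fun k _ => ((h₁.2.1 (c k)).nnnorm.coe_nnreal_ennreal.pow_const 2))]
        rfl
    _ ≤ B₂ * ∑ k, B₁ * (‖c k‖₊ : ℝ≥0∞) ^ 2 :=
        mul_le_mul_right (Finset.sum_le_sum fun k _ => h₁.2.2 (c k)) B₂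
    _ = B₁ * B₂ * (‖f‖₊ : ℝ≥0∞) ^ 2 := by
        rw [hfdef, enorm_sq_sum_tmul_orthonormal tp c he, ← Finset.mul_sum]
        ring

/-- Forward direction: tensor of Bessel mappings is Bessel. -/
lemma isBessel_tensor (μ₁ : Measure X₁) (μ₂ : Measure X₂)
    [SigmaFinite μ₁] [SigmaFinite μ₂] {F₁ : X₁ → H₁} {F₂ : X₂ → H₂} {B₁ B₂ : ℝ≥0∞}
    (h₁ : IsBesselMapping μ₁ F₁ B₁) (h₂ : IsBesselMapping μ₂ F₂ B₂) :
    IsBesselMapping (μ₁.prod μ₂)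
      (fun x : X₁ × X₂ => tp.tmul (F₁ x.1) (F₂ x.2)) (B₁ * B₂) := by
  have wm := weaklyMeasurable_tensor tp μ₁ μ₂ h₁.2.1 h₂.2.1
  refine ⟨ENNReal.mul_lt_top h₁.1 h₂.1, wm, ?_⟩
  intro f
  set T : X₁ × X₂ → H := fun x => tp.tmul (F₁ x.1) (F₂ x.2) with hT
  have hd := tp.dense_span
  have hch : ∀ n : ℕ, ∃ y ∈ (↑(Submodule.span ℂ {z : H | ∃ a b, z = tp.tmul a b}) : Set H),
      dist f y < 1 / (n + 1) := fun n => hd.exists_dist_lt f (by positivity)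
  choose seq hmem hdist using hch
  have ht : Filter.Tendsto seq Filter.atTop (nhds f) := by
    rw [tendsto_iff_dist_tendsto_zero]
    refine squeeze_zero (fun n => dist_nonneg) (fun n => ?_)
      tendsto_one_div_add_atTop_nhds_zero_nat
    rw [dist_comm]
    exact (hdist n).le
  have hb : ∀ n, frameInt (μ₁.prod μ₂) T (seq n) ≤ B₁ * B₂ * (‖seq n‖₊ : ℝ≥0∞) ^ 2 := by
    intro n
    obtain ⟨m, c, e, he, hrep⟩ := exists_orthonormal_repr tp (hmem n)
    rw [hrep]
    exact frameInt_le_of_orthonormal tp μ₁ μ₂ h₁ h₂ c he (hrep ▸ wm (seq n))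
  have hptw : ∀ x, Filter.Tendsto (fun n => (‖pinner (seq n) (T x)‖₊ : ℝ≥0∞) ^ 2)
      Filter.atTop (nhds ((‖pinner f (T x)‖₊ : ℝ≥0∞) ^ 2)) := by
    intro x
    have h0 : Filter.Tendsto (fun n => pinner (seq n) (T x)) Filter.atTop
        (nhds (pinner f (T x))) := Filter.Tendsto.inner tendsto_const_nhds ht
    exact ((ENNReal.continuous_pow 2).continuousAt.tendsto).comp
      (ENNReal.tendsto_coe.2 h0.nnnorm)
  have key1 : frameInt (μ₁.prod μ₂) T f
      ≤ Filter.liminf (fun n => frameInt (μ₁.prod μ₂) T (seq n)) Filter.atTop := by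
    have heq : frameInt (μ₁.prod μ₂) T f
        = ∫⁻ x, Filter.liminf (fun n => (‖pinner (seq n) (T x)‖₊ : ℝ≥0∞) ^ 2)
            Filter.atTop ∂(μ₁.prod μ₂) :=
      lintegral_congr fun x => ((hptw x).liminf_eq).symm
    rw [heq]
    exact lintegral_liminf_le' fun n => (wm (seq n)).nnnorm.coe_nnreal_ennreal.pow_const 2
  have key2 : Filter.liminf (fun n => frameInt (μ₁.prod μ₂) T (seq n)) Filter.atTop
      ≤ B₁ * B₂ * (‖f‖₊ : ℝ≥0∞) ^ 2 := by
    have hlim : Filter.Tendsto (fun n => B₁ * B₂ * (‖seq n‖₊ : ℝ≥0∞) ^ 2) Filter.atTop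
        (nhds (B₁ * B₂ * (‖f‖₊ : ℝ≥0∞) ^ 2)) := by
      refine ENNReal.Tendsto.const_mul ?_ (Or.inr (ENNReal.mul_ne_top h₁.1.ne h₂.1.ne))
      exact ((ENNReal.continuous_pow 2).continuousAt.tendsto).comp
        (ENNReal.tendsto_coe.2 ht.nnnorm)
    calc Filter.liminf (fun n => frameInt (μ₁.prod μ₂) T (seq n)) Filter.atTop
        ≤ Filter.liminf (fun n => B₁ * B₂ * (‖seq n‖₊ : ℝ≥0∞) ^ 2) Filter.atTop :=
          Filter.liminf_le_liminf (Filter.Eventually.of_forall hb)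
      _ = B₁ * B₂ * (‖f‖₊ : ℝ≥0∞) ^ 2 := hlim.liminf_eq
  exact key1.trans key2

end Forward

/-! ### Main theorem -/

theorem tensor_isBessel_iff
    {X₁ X₂ : Type*} [MeasurableSpace X₁] [MeasurableSpace X₂]
    {H₁ H₂ H : Type*}
    [NormedAddCommGroup H₁] [InnerProductSpace ℂ H₁] [CompleteSpace H₁]
      [TopologicalSpace.SeparableSpace H₁]
    [NormedAddCommGroup H₂] [InnerProductSpace ℂ H₂] [CompleteSpace H₂]
      [TopologicalSpace.SeparableSpace H₂]
    [NormedAddCommGroup H] [InnerProductSpace ℂ H] [CompleteSpace H]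
      [TopologicalSpace.SeparableSpace H]
    (μ₁ : Measure X₁) (μ₂ : Measure X₂) [SigmaFinite μ₁] [SigmaFinite μ₂]
    (tp : HilbertTensorProduct H₁ H₂ H)
    (F₁ : X₁ → H₁) (F₂ : X₂ → H₂)
    (hg₁ : ∃ g₁ : H₁, 0 < frameInt μ₁ F₁ g₁ ∧ frameInt μ₁ F₁ g₁ < ⊤)
    (hg₂ : ∃ g₂ : H₂, 0 < frameInt μ₂ F₂ g₂ ∧ frameInt μ₂ F₂ g₂ < ⊤) :
    (∃ B, IsBesselMapping (μ₁.prod μ₂)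
        (fun x : X₁ × X₂ => tp.tmul (F₁ x.1) (F₂ x.2)) B) ↔
      (∃ B₁, IsBesselMapping μ₁ F₁ B₁) ∧ (∃ B₂, IsBesselMapping μ₂ F₂ B₂) := by
  constructor
  · rintro ⟨B, hB⟩
    obtain ⟨g₁, hg₁pos, hg₁fin⟩ := hg₁
    obtain ⟨g₂, hg₂pos, hg₂fin⟩ := hg₂
    have wm₁ := weaklyMeasurable_left_of_tensor tp μ₁ μ₂ hB.2.1 hg₂pos
    have wm₂ := weaklyMeasurable_right_of_tensor tp μ₁ μ₂ hB.2.1 hg₁pos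
    exact ⟨bessel_left_of_tensor tp μ₁ μ₂ hB hg₂pos hg₂fin wm₁ (wm₂ g₂),
      bessel_right_of_tensor tp μ₁ μ₂ hB hg₁pos hg₁fin wm₂ (wm₁ g₁)⟩
  · rintro ⟨⟨B₁, h₁⟩, ⟨B₂, h₂⟩⟩
    exact ⟨B₁ * B₂, isBessel_tensor tp μ₁ μ₂ h₁ h₂⟩

end ContFrame
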